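/- arXiv:1306.6071 — 4 statements merged into one kernel-verified Lean document; each statement's English description precedes it below -/
import Mathlib

section
/- (Corollary 1, collapse in space-time coordinates.) Let c > 0, let v1, v2 be real with |v1| < c and |v2| < c, and let t1', t2' be real. Write a = √(1 − v1²/c²) and b = √(1 − v2²/c²), and assume D := v2·a − v1·b ≠ 0. Define the phase velocity v_phase = c²·(a + b)/D, the spatial separation Δx = (v2·t2'·a + v1·t1'·b)/(a·b), and the time separation Δt = (t2'·a − t1'·b)/(a·b). Then Δx = v_phase·Δt if and only if t1' = t2'. -/
/-- Corollary 1, collapse in space-time coordinates.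
With `a = √(1 − v1²/c²)`, `b = √(1 − v2²/c²)`, `D = v2·a − v1·b ≠ 0`,
phase velocity `v_phase = c²·(a+b)/D`, `Δx = (v2·t2'·a + v1·t1'·b)/(a·b)`,
`Δt = (t2'·a − t1'·b)/(a·b)`, one has `Δx = v_phase·Δt ↔ t1' = t2'`. -/
theorem collapse_spacetime_proper_times_eq
    (c v1 v2 t1' t2' : ℝ) (hc : 0 < c) (h1 : |v1| < c) (h2 : |v2| < c)
    (a b D vphase Δx Δt : ℝ)
    (ha : a = Real.sqrt (1 - v1 ^ 2 / c ^ 2))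
    (hb : b = Real.sqrt (1 - v2 ^ 2 / c ^ 2))
    (hD : D = v2 * a - v1 * b) (hD0 : D ≠ 0)
    (hv : vphase = c ^ 2 * (a + b) / D)
    (hx : Δx = (v2 * t2' * a + v1 * t1' * b) / (a * b))
    (ht : Δt = (t2' * a - t1' * b) / (a * b)) :
    Δx = vphase * Δt ↔ t1' = t2' := by
  have hc2 : (0:ℝ) < c ^ 2 := by positivity
  have h1' : v1 ^ 2 < c ^ 2 := by
    have := abs_lt.mp h1; nlinarith [this.1, this.2]
  have h2' : v2 ^ 2 < c ^ 2 := by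
    have := abs_lt.mp h2; nlinarith [this.1, this.2]
  have ha0 : 0 < a := by
    rw [ha]; apply Real.sqrt_pos.mpr
    have : v1 ^ 2 / c ^ 2 < 1 := (div_lt_one hc2).mpr h1'
    linarith
  have hb0 : 0 < b := by
    rw [hb]; apply Real.sqrt_pos.mpr
    have : v2 ^ 2 / c ^ 2 < 1 := (div_lt_one hc2).mpr h2'
    linarith
  have ha2 : a ^ 2 * c ^ 2 = c ^ 2 - v1 ^ 2 := by
    rw [ha, Real.sq_sqrt (by nlinarith [(div_lt_one hc2).mpr h1'] : (0:ℝ) ≤ 1 - v1 ^ 2 / c ^ 2)]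
    field_simp
  have hb2 : b ^ 2 * c ^ 2 = c ^ 2 - v2 ^ 2 := by
    rw [hb, Real.sq_sqrt (by nlinarith [(div_lt_one hc2).mpr h2'] : (0:ℝ) ≤ 1 - v2 ^ 2 / c ^ 2)]
    field_simp
  have hab : a * b ≠ 0 := by positivity
  have hK : 0 < a * b * c ^ 2 + v1 * v2 + c ^ 2 := by
    nlinarith [sq_nonneg (v1 + v2), mul_pos ha0 hb0]
  have polyc : c ^ 2 * ((v2 * t2' * a + v1 * t1' * b) * (v2 * a - v1 * b)
        - c ^ 2 * (a + b) * (t2' * a - t1' * b))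
      = c ^ 2 * (a * b * (t1' - t2') * (a * b * c ^ 2 + v1 * v2 + c ^ 2)) := by
    linear_combination (-(t1' * (c ^ 2 - v2 ^ 2))
        - (t1' - t2') * (b ^ 2 * c ^ 2 - (c ^ 2 - v2 ^ 2))) * ha2
      + t2' * (c ^ 2 - v1 ^ 2) * hb2
  have poly : (v2 * t2' * a + v1 * t1' * b) * (v2 * a - v1 * b)
        - c ^ 2 * (a + b) * (t2' * a - t1' * b)
      = a * b * (t1' - t2') * (a * b * c ^ 2 + v1 * v2 + c ^ 2) :=
    mul_left_cancel₀ (ne_of_gt hc2) polyc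
  have hD0' : v2 * a - v1 * b ≠ 0 := hD ▸ hD0
  rw [hx, ht, hv, hD, div_mul_div_comm,
    div_eq_div_iff hab (mul_ne_zero hD0' hab)]
  constructor
  · intro h
    have h0 : (t1' - t2') * ((a * b * c ^ 2 + v1 * v2 + c ^ 2) * (a * b) * (a * b)) = 0 := by
      linear_combination h - (a * b) * poly
    have hne : (a * b * c ^ 2 + v1 * v2 + c ^ 2) * (a * b) * (a * b) ≠ 0 := by
      have : 0 < (a * b * c ^ 2 + v1 * v2 + c ^ 2) * (a * b) * (a * b) := by
        have hab0 : 0 < a * b := mul_pos ha0 hb0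
        positivity
      exact ne_of_gt this
    have := (mul_eq_zero.mp h0).resolve_right hne
    linarith
  · intro h
    subst h
    linear_combination (a * b) * poly
end

section
/- (Collapse in energy-momentum space, equations (5g)–(5l).) Let c > 0, let v1, v2 be real with |v1| < c, |v2| < c and v1² ≠ v2², and let t1', t2' be real. Write a = √(1 − v1²/c²) and b = √(1 − v2²/c²), and assume v2·t2'·a − v1·t1'·b ≠ 0. If (v2·a + v1·b)/(c²·(a − b)) = (t2'·a + t1'·b)/(v2·t2'·a − v1·t1'·b), then t1' = t2'. -/
/-- Collapse in energy-momentum space, equations (5g)–(5l).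
With `a = √(1 − v1²/c²)`, `b = √(1 − v2²/c²)`, `v1² ≠ v2²`, and
`v2·t2'·a − v1·t1'·b ≠ 0`, if
`(v2·a + v1·b)/(c²·(a − b)) = (t2'·a + t1'·b)/(v2·t2'·a − v1·t1'·b)`
then `t1' = t2'`. -/
theorem collapse_energy_momentum (c v1 v2 t1' t2' : ℝ) (hc : 0 < c)
    (h1 : |v1| < c) (h2 : |v2| < c) (hne : v1 ^ 2 ≠ v2 ^ 2)
    (a b : ℝ)
    (ha : a = Real.sqrt (1 - v1 ^ 2 / c ^ 2))
    (hb : b = Real.sqrt (1 - v2 ^ 2 / c ^ 2))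
    (hden : v2 * t2' * a - v1 * t1' * b ≠ 0)
    (heq : (v2 * a + v1 * b) / (c ^ 2 * (a - b))
        = (t2' * a + t1' * b) / (v2 * t2' * a - v1 * t1' * b)) :
    t1' = t2' := by
  have hc2 : (0:ℝ) < c ^ 2 := by positivity
  have hv1 : v1 ^ 2 < c ^ 2 := by
    have := abs_lt.mp h1; nlinarith [this.1, this.2]
  have hv2 : v2 ^ 2 < c ^ 2 := by
    have := abs_lt.mp h2; nlinarith [this.1, this.2]
  have hpa : (0:ℝ) < 1 - v1 ^ 2 / c ^ 2 := by
    rw [sub_pos, div_lt_one hc2]; exact hv1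
  have hpb : (0:ℝ) < 1 - v2 ^ 2 / c ^ 2 := by
    rw [sub_pos, div_lt_one hc2]; exact hv2
  have ha0 : 0 < a := ha ▸ Real.sqrt_pos.mpr hpa
  have hb0 : 0 < b := hb ▸ Real.sqrt_pos.mpr hpb
  have ha2 : a ^ 2 = 1 - v1 ^ 2 / c ^ 2 := by
    rw [ha, Real.sq_sqrt hpa.le]
  have hb2 : b ^ 2 = 1 - v2 ^ 2 / c ^ 2 := by
    rw [hb, Real.sq_sqrt hpb.le]
  have hA : c ^ 2 * a ^ 2 = c ^ 2 - v1 ^ 2 := by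
    rw [ha2]; field_simp
  have hB : c ^ 2 * b ^ 2 = c ^ 2 - v2 ^ 2 := by
    rw [hb2]; field_simp
  have hab : a ≠ b := by
    intro h
    apply hne
    have : c ^ 2 * a ^ 2 = c ^ 2 * b ^ 2 := by rw [h]
    nlinarith [this, hA, hB]
  have hdc : c ^ 2 * (a - b) ≠ 0 := by
    apply mul_ne_zero (ne_of_gt hc2)
    exact sub_ne_zero.mpr hab
  have heq' : (v2 * a + v1 * b) * (v2 * t2' * a - v1 * t1' * b)
      = (t2' * a + t1' * b) * (c ^ 2 * (a - b)) :=
    (div_eq_div_iff hdc hden).mp heq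
  have hkey : (t1' - t2') * (a * b) * (c ^ 2 * (a * b) - v1 * v2 - c ^ 2) = 0 := by
    linear_combination heq' + t1' * b ^ 2 * hA - t2' * a ^ 2 * hB
  -- show the last factor is negative
  have hsum : v1 + v2 ≠ 0 := by
    intro h
    apply hne
    have : v1 = -v2 := by linarith
    rw [this]; ring
  have hsq : (c ^ 2 * (a * b)) ^ 2 < (v1 * v2 + c ^ 2) ^ 2 := by
    have h1' : (c ^ 2 * (a * b)) ^ 2 = (c ^ 2 - v1 ^ 2) * (c ^ 2 - v2 ^ 2) := by
      have : (c ^ 2 * (a * b)) ^ 2 = (c ^ 2 * a ^ 2) * (c ^ 2 * b ^ 2) := by ring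
      rw [this, hA, hB]
    have hs : 0 < (v1 + v2) ^ 2 := by positivity
    have hdiff : (v1 * v2 + c ^ 2) ^ 2 - (c ^ 2 * (a * b)) ^ 2 = c ^ 2 * (v1 + v2) ^ 2 := by
      rw [h1']; ring
    linarith [hdiff, mul_pos hc2 hs]
  have hpos1 : 0 < v1 * v2 + c ^ 2 := by
    have e : 2 * (v1 * v2 + c ^ 2) = (v1 + v2) ^ 2 + (c ^ 2 - v1 ^ 2) + (c ^ 2 - v2 ^ 2) := by ring
    linarith [sq_nonneg (v1 + v2), hv1, hv2, e]
  have hpos2 : 0 < c ^ 2 * (a * b) := by positivity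
  have hneg : c ^ 2 * (a * b) - v1 * v2 - c ^ 2 < 0 := by
    have h2' : c ^ 2 * (a * b) < v1 * v2 + c ^ 2 :=
      lt_of_pow_lt_pow_left₀ 2 hpos1.le hsq
    linarith
  have habpos : 0 < a * b := mul_pos ha0 hb0
  by_contra hne'
  have h0 : t1' - t2' ≠ 0 := sub_ne_zero.mpr hne'
  have : (t1' - t2') * (a * b) * (c ^ 2 * (a * b) - v1 * v2 - c ^ 2) ≠ 0 :=
    mul_ne_zero (mul_ne_zero h0 (ne_of_gt habpos)) (ne_of_lt hneg)
  exact this hkey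
end

section
/- (Phase velocity in energy-momentum space exceeds unity, second half of (5n).) Let c > 0 and let v1, v2 be real with 0 < v1 < c and 0 < v2 < c. Write γ1 = 1/√(1 − v1²/c²) and γ2 = 1/√(1 − v2²/c²). Then v2·γ2 + v1·γ1 > c·|γ2 − γ1|; equivalently, for a particle-antiparticle pair of common mass m > 0 moving apart with speeds v1 and v2, the momentum difference and energy difference satisfy c·|ΔP| > |ΔE| where ΔP = m·v2·γ2 + m·v1·γ1 and ΔE = m·c²·(γ2 − γ1). -/
lemma gamma_facts (c v : ℝ) (hc : 0 < c) (hl : 0 < v) (hu : v < c) :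
    1 ≤ 1 / Real.sqrt (1 - v ^ 2 / c ^ 2) ∧
    c * (1 / Real.sqrt (1 - v ^ 2 / c ^ 2) - 1) <
      v * (1 / Real.sqrt (1 - v ^ 2 / c ^ 2)) := by
  have hc2 : (0:ℝ) < c ^ 2 := by positivity
  have hx : 0 < 1 - v ^ 2 / c ^ 2 := by
    have : v ^ 2 < c ^ 2 := by nlinarith
    have : v ^ 2 / c ^ 2 < 1 := (div_lt_one hc2).2 this
    linarith
  set s := Real.sqrt (1 - v ^ 2 / c ^ 2) with hs
  have hs0 : 0 < s := Real.sqrt_pos.2 hx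
  have hssq : s ^ 2 = 1 - v ^ 2 / c ^ 2 := Real.sq_sqrt (le_of_lt hx)
  have hs1 : s ≤ 1 := by
    refine Real.sqrt_le_one.2 ?_
    have : 0 < v ^ 2 / c ^ 2 := by positivity
    linarith
  have hg0 : 0 < 1 / s := by positivity
  have hginv : s * (1 / s) = 1 := by field_simp
  constructor
  · rw [le_div_iff₀ hs0]; linarith
  · have hcs : c ^ 2 * s ^ 2 = c ^ 2 - v ^ 2 := by
      rw [hssq]; field_simp
    have h1 : c - v < c * s := by
      nlinarith [hcs, mul_pos hc hs0]
    have h2 : c * (1 - s) < v := by nlinarith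
    nlinarith [mul_lt_mul_of_pos_right h2 hg0, hginv]

/-- Second half of (5n): for `0 < v1 < c`, `0 < v2 < c`, with
`γᵢ = 1/√(1 − vᵢ²/c²)`, one has `v2·γ2 + v1·γ1 > c·|γ2 − γ1|`; equivalently,
for any common mass `m > 0`, `c·|ΔP| > |ΔE|` where `ΔP = m·v2·γ2 + m·v1·γ1`
and `ΔE = m·c²·(γ2 − γ1)`. -/
theorem phase_velocity_energy_momentum_exceeds_unity (c v1 v2 : ℝ) (hc : 0 < c)
    (h1l : 0 < v1) (h1u : v1 < c) (h2l : 0 < v2) (h2u : v2 < c)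
    (γ1 γ2 : ℝ)
    (hγ1 : γ1 = 1 / Real.sqrt (1 - v1 ^ 2 / c ^ 2))
    (hγ2 : γ2 = 1 / Real.sqrt (1 - v2 ^ 2 / c ^ 2)) :
    v2 * γ2 + v1 * γ1 > c * |γ2 - γ1|
      ∧ ∀ m : ℝ, 0 < m →
          c * |m * v2 * γ2 + m * v1 * γ1| > |m * c ^ 2 * (γ2 - γ1)| := by
  obtain ⟨hg1, hk1⟩ := gamma_facts c v1 hc h1l h1u
  obtain ⟨hg2, hk2⟩ := gamma_facts c v2 hc h2l h2u
  rw [← hγ1] at hg1 hk1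
  rw [← hγ2] at hg2 hk2
  have hmain : v2 * γ2 + v1 * γ1 > c * |γ2 - γ1| := by
    rcases le_or_gt γ1 γ2 with h | h
    · rw [abs_of_nonneg (by linarith)]
      nlinarith
    · rw [abs_of_neg (by linarith)]
      nlinarith
  refine ⟨hmain, fun m hm => ?_⟩
  have hγ1p : (0:ℝ) < γ1 := by linarith
  have hγ2p : (0:ℝ) < γ2 := by linarith
  have hP : 0 < m * v2 * γ2 + m * v1 * γ1 := by
    nlinarith [mul_pos (mul_pos hm h2l) hγ2p, mul_pos (mul_pos hm h1l) hγ1p]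
  rw [abs_of_pos hP, abs_mul, abs_of_pos (by positivity : (0:ℝ) < m * c ^ 2)]
  nlinarith [mul_lt_mul_of_pos_left hmain (mul_pos hm hc)]
end

section
/- (Theorem 3: the speed of the exchanged virtual particle equals the phase velocity of the entangled system.) Let c > 0 and let m_e, m_μ > 0. Let E_e, E_e', E_μ, E_μ' > 0 and p_e, p_e', p_μ, p_μ' be real numbers satisfying the mass-shell conditions E_e² = c²·p_e² + m_e²·c⁴, E_e'² = c²·p_e'² + m_e²·c⁴, E_μ² = c²·p_μ² + m_μ²·c⁴, E_μ'² = c²·p_μ'² + m_μ²·c⁴, and the conservation laws E_e + E_μ = E_e' + E_μ' and p_e + p_μ = p_e' + p_μ'. Assume p_e + p_μ ≠ 0, p_e + p_e' ≠ 0, p_μ + p_μ' ≠ 0, and E_e' ≠ E_e. Then (E_e + E_μ)/(p_e + p_μ) = c²·(p_e' − p_e)/(E_e' − E_e); that is, the phase velocity of the two-particle system equals the speed of the exchanged virtual photon. -/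
/-- Theorem 3: with mass-shell conditions and energy-momentum
conservation in electron–muon scattering, the phase velocity of the
two-particle system equals the speed of the exchanged virtual photon:
`(E_e + E_μ)/(p_e + p_μ) = c²·(p_e' − p_e)/(E_e' − E_e)`. -/
theorem virtual_particle_speed_eq_phase_velocity
    (c me mμ Ee Ee' Eμ Eμ' pe pe' pμ pμ' : ℝ)
    (hc : 0 < c) (hme : 0 < me) (hmμ : 0 < mμ)
    (hEe : 0 < Ee) (hEe' : 0 < Ee') (hEμ : 0 < Eμ) (hEμ' : 0 < Eμ')
    (shell_e : Ee ^ 2 = c ^ 2 * pe ^ 2 + me ^ 2 * c ^ 4)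
    (shell_e' : Ee' ^ 2 = c ^ 2 * pe' ^ 2 + me ^ 2 * c ^ 4)
    (shell_μ : Eμ ^ 2 = c ^ 2 * pμ ^ 2 + mμ ^ 2 * c ^ 4)
    (shell_μ' : Eμ' ^ 2 = c ^ 2 * pμ' ^ 2 + mμ ^ 2 * c ^ 4)
    (consE : Ee + Eμ = Ee' + Eμ')
    (consP : pe + pμ = pe' + pμ')
    (hP : pe + pμ ≠ 0) (hPe : pe + pe' ≠ 0) (hPμ : pμ + pμ' ≠ 0)
    (hEne : Ee' ≠ Ee) :
    (Ee + Eμ) / (pe + pμ) = c ^ 2 * (pe' - pe) / (Ee' - Ee) := by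
  have h1 : (Ee' - Ee) * (Ee' + Ee) = c ^ 2 * ((pe' - pe) * (pe' + pe)) := by
    linear_combination shell_e' - shell_e
  have h2 : (Ee' - Ee) * (Eμ' + Eμ) = c ^ 2 * ((pe' - pe) * (pμ' + pμ)) := by
    linear_combination shell_μ - shell_μ' - (Eμ' + Eμ) * consE + c ^ 2 * (pμ' + pμ) * consP
  have hE : Ee' - Ee ≠ 0 := sub_ne_zero.mpr hEne
  have key : (Ee' - Ee) * (2 * (Ee + Eμ)) = c ^ 2 * ((pe' - pe) * (2 * (pe + pμ))) := by
    linear_combination h1 + h2 + (Ee' - Ee) * consE - c ^ 2 * (pe' - pe) * consP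
  field_simp
  linear_combination key / 2
end
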